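/- For all integers λ1, λ2, β1, β2 with λ1 ≥ 0, λ2 ≥ 0, λ1 + λ2 − β1 + β2 ≥ 0, −λ1 − 2λ2 + β1 ≥ 0, −λ1 + β1 − β2 ≥ 0 and β1 − 2β2 ≥ 0, one has N(λ1, λ2, β1, β2) = 1 + (1/2)β2² + (1/2)λ1² + (1/2)λ2² + λ1λ2 + λ2β2 + λ1β2 + (3/2)β2 + (3/2)λ2 + (3/2)λ1 − (3/2)β1 + (1/2)β1² − λ2β1 − β1β2 − λ1β1. -/

import Mathlib

def triFin (n : ℕ) : Finset (ℕ × ℕ) :=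
  (Finset.range (n+1)).biUnion (fun s => Finset.HasAntidiagonal.antidiagonal s)

lemma mem_triFin {n : ℕ} {p : ℕ × ℕ} : p ∈ triFin n ↔ p.1 + p.2 ≤ n := by
  simp only [triFin, Finset.mem_biUnion, Finset.mem_range, Finset.HasAntidiagonal.mem_antidiagonal]
  constructor
  · rintro ⟨s, hs, h⟩; omega
  · intro h; exact ⟨p.1 + p.2, by omega, rfl⟩

lemma sum_succ_range (n : ℕ) : (∑ s ∈ Finset.range (n+1), (s+1)) * 2 = (n+1)*(n+2) := by
  induction n with
  | zero => simp
  | succ k ih => rw [Finset.sum_range_succ, add_mul, ih]; ring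

lemma card_triFin (n : ℕ) : (triFin n).card * 2 = (n+1)*(n+2) := by
  rw [triFin, Finset.card_biUnion]
  · rw [show ∑ s ∈ Finset.range (n+1), (Finset.HasAntidiagonal.antidiagonal s).card
        = ∑ s ∈ Finset.range (n+1), (s+1) by simp [Finset.Nat.card_antidiagonal]]
    exact sum_succ_range n
  · intro x hx y hy hxy
    rw [Function.onFun, Finset.disjoint_left]
    intro p hp hq
    rw [Finset.HasAntidiagonal.mem_antidiagonal] at hp hq
    omega


/-- The number of quadruples `(a22, a11, a12, a13)` of nonnegative integers satisfying
Littelmann's inequalities for `so₅(ℂ)` together with the weight equations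
`a22 + a12 = β1` and `a11 + a13 = β2`.  By Littelmann's results this is the dimension of
the weight space of weight `λ1·ω1 + λ2·ω2 − β1·α1 − β2·α2` in the irreducible
`so₅(ℂ)`-module of highest weight `λ1·ω1 + λ2·ω2`. -/
noncomputable def weightMult (l1 l2 b1 b2 : ℤ) : ℕ :=
  Set.ncard {a : ℤ × ℤ × ℤ × ℤ |
    0 ≤ a.1 ∧ 0 ≤ a.2.1 ∧ 0 ≤ a.2.2.1 ∧ 0 ≤ a.2.2.2 ∧
    2 * a.2.1 ≥ a.2.2.1 ∧
    a.2.2.1 ≥ 2 * a.2.2.2 ∧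
    a.2.2.2 ≤ l2 ∧
    a.2.2.1 ≤ l1 + 2 * a.2.2.2 ∧
    a.2.1 ≤ l2 + a.2.2.1 - 2 * a.2.2.2 ∧
    a.1 ≤ l1 + 2 * a.2.1 - 2 * a.2.2.1 + 2 * a.2.2.2 ∧
    a.1 + a.2.2.1 = b1 ∧
    a.2.1 + a.2.2.2 = b2}

theorem weightMult_on_cone_f20 (l1 l2 b1 b2 : ℤ)
    (h0 : 0 ≤ l1)
    (h1 : 0 ≤ l2)
    (h2 : 0 ≤ l1 + l2 - b1 + b2)
    (h3 : 0 ≤ -l1 - 2*l2 + b1)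
    (h4 : 0 ≤ -l1 + b1 - b2)
    (h5 : 0 ≤ b1 - 2*b2) :
    (weightMult l1 l2 b1 b2 : ℚ) = 1 + (1/2)*b2^2 + (1/2)*l1^2 + (1/2)*l2^2 + l1*l2 + l2*b2 + l1*b2 + (3/2)*b2 + (3/2)*l2 + (3/2)*l1 - (3/2)*b1 + (1/2)*b1^2 - l2*b1 - b1*b2 - l1*b1 := by
  set n : ℕ := (l1 + l2 - b1 + b2).toNat with hn
  have hnZ : (n : ℤ) = l1 + l2 - b1 + b2 := Int.toNat_of_nonneg h2
  set g : ℕ × ℕ → ℤ × ℤ × ℤ × ℤ :=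
    fun p => (b1 - (b2 - l2 + p.1 + p.2), b2 - (p.1 : ℤ),
      b2 - l2 + p.1 + p.2, (p.1 : ℤ)) with hg
  have hginj : Function.Injective g := by
    intro p q hpq
    rw [hg] at hpq
    simp only [Prod.mk.injEq] at hpq
    obtain ⟨_, _, h3', h4'⟩ := hpq
    have : p.1 = q.1 := by exact_mod_cast h4'
    have : p.2 = q.2 := by omega
    exact Prod.ext ‹p.1 = q.1› this
  have hset : {a : ℤ × ℤ × ℤ × ℤ |
      0 ≤ a.1 ∧ 0 ≤ a.2.1 ∧ 0 ≤ a.2.2.1 ∧ 0 ≤ a.2.2.2 ∧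
      2 * a.2.1 ≥ a.2.2.1 ∧
      a.2.2.1 ≥ 2 * a.2.2.2 ∧
      a.2.2.2 ≤ l2 ∧
      a.2.2.1 ≤ l1 + 2 * a.2.2.2 ∧
      a.2.1 ≤ l2 + a.2.2.1 - 2 * a.2.2.2 ∧
      a.1 ≤ l1 + 2 * a.2.1 - 2 * a.2.2.1 + 2 * a.2.2.2 ∧
      a.1 + a.2.2.1 = b1 ∧
      a.2.1 + a.2.2.2 = b2} = g '' ↑(triFin n) := by
    ext ⟨a22, a11, a12, a13⟩
    simp only [Set.mem_setOf_eq, Set.mem_image, Finset.mem_coe, mem_triFin, hg,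
      Prod.mk.injEq]
    constructor
    · rintro ⟨c1, c2, c3, c4, c5, c6, c7, c8, c9, c10, e1, e2⟩
      refine ⟨(a13.toNat, (a12 - (b2 - l2 + a13)).toNat), by omega, ?_, ?_, ?_, ?_⟩ <;> omega
    · rintro ⟨⟨x, z⟩, hxz, e1, e2, e3, e4⟩
      refine ⟨?_, ?_, ?_, ?_, ?_, ?_, ?_, ?_, ?_, ?_, ?_, ?_⟩ <;> omega
  have hcard : weightMult l1 l2 b1 b2 = (triFin n).card := by
    rw [weightMult, hset, Set.ncard_image_of_injective _ hginj, Set.ncard_coe_finset]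
  have h2c : ((triFin n).card : ℚ) * 2 = ((n : ℚ) + 1) * ((n : ℚ) + 2) := by
    exact_mod_cast card_triFin n
  have hnQ : (n : ℚ) = (l1 : ℚ) + l2 - b1 + b2 := by exact_mod_cast hnZ
  rw [hnQ] at h2c
  rw [hcard]
  linear_combination h2c / 2
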